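/- Let 0 < ε₁ < 1/16 and 0 < ε₂ < 1/2, let G : M → M be the bijection determined by G(Φ(ρ,θ)) = Φ(ρ + ε₁P(ρ), θ + ε₂ sin 2θ), let G⁻¹ be its inverse, and let R : M → M be the rotation R(x,y) = (−y,x). Then the image of the ellipse E = {(x,y) : x²/16 + y²/4 = 1} under the composition R ∘ G ∘ R ∘ G⁻¹ is disjoint from E (so the composition R∘S with S = G∘R∘G⁻¹ does not possess the intersection property). -/

import Mathlib

open Real Set

noncomputable def χ (ρ : ℝ) : ℝ := (7 * ρ - 5) / (ρ + 1)
noncomputable def η (ρ : ℝ) : ℝ := (ρ + 5) / (7 - ρ)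
noncomputable def P (ρ : ℝ) : ℝ := (ρ - 1) * (ρ - 3) ^ 2 * (ρ - 5)

/-- The closed annulus `M = {(x,y) : 1 ≤ x² + y² ≤ 25}`. -/
def Mset : Set (ℝ × ℝ) := {p | 1 ≤ p.1 ^ 2 + p.2 ^ 2 ∧ p.1 ^ 2 + p.2 ^ 2 ≤ 25}

/-- The parametrization `Φ(ρ,θ) = (χ(ρ) cos θ, η(ρ) sin θ)`. -/
noncomputable def Φ (ρ θ : ℝ) : ℝ × ℝ := (χ ρ * Real.cos θ, η ρ * Real.sin θ)

/-- The ellipse `E = {(x,y) : x²/16 + y²/4 = 1}`. -/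
def Ell : Set (ℝ × ℝ) := {p | p.1 ^ 2 / 16 + p.2 ^ 2 / 4 = 1}

/-- The rotation by `π/2`:  `R(x,y) = (-y,x)`. -/
def Rot (p : ℝ × ℝ) : ℝ × ℝ := (-p.2, p.1)

lemma chi_lt {a b : ℝ} (ha : -1 < a) (hab : a < b) (hb : b < 7) : χ a < χ b := by
  unfold χ
  rw [div_lt_div_iff₀ (by linarith) (by linarith)]
  nlinarith

lemma eta_lt {a b : ℝ} (ha : -1 < a) (hab : a < b) (hb : b < 7) : η a < η b := by
  unfold η
  rw [div_lt_div_iff₀ (by linarith) (by linarith)]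
  nlinarith

lemma chi_le {a b : ℝ} (ha : -1 < a) (hab : a ≤ b) (hb : b < 7) : χ a ≤ χ b := by
  rcases eq_or_lt_of_le hab with rfl | h
  · exact le_rfl
  · exact (chi_lt ha h hb).le

lemma eta_le {a b : ℝ} (ha : -1 < a) (hab : a ≤ b) (hb : b < 7) : η a ≤ η b := by
  rcases eq_or_lt_of_le hab with rfl | h
  · exact le_rfl
  · exact (eta_lt ha h hb).le

lemma eta_le_chi {ρ : ℝ} (h1 : 1 ≤ ρ) (h5 : ρ ≤ 5) : η ρ ≤ χ ρ := by
  unfold χ η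
  rw [div_le_div_iff₀ (by linarith) (by linarith)]
  nlinarith [mul_nonneg (show (0:ℝ) ≤ ρ - 1 by linarith) (show (0:ℝ) ≤ 5 - ρ by linarith)]

lemma keyA_pos {δ φ : ℝ} (hδ0 : 0 < δ) (hδ1 : δ ≤ 1) (hs : 0 < Real.sin φ) :
    Real.cos (φ + δ * Real.sin φ) < Real.cos φ := by
  have h2π : (0:ℝ) < 2 * π := by positivity
  set k : ℤ := ⌊φ / (2 * π)⌋ with hk
  have h0 : 0 ≤ φ - k * (2 * π) := Int.sub_floor_div_mul_nonneg φ h2π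
  have h2 : φ - k * (2 * π) < 2 * π := Int.sub_floor_div_mul_lt φ h2π
  set ψ := φ - k * (2 * π) with hψ
  have hφeq : φ = ψ + k * (2 * π) := by ring
  have hsin : Real.sin ψ = Real.sin φ := by
    rw [hφeq, Real.sin_add_int_mul_two_pi]
  have hψπ : ψ < π := by
    by_contra h
    push_neg at h
    have h1 : 0 ≤ Real.sin (ψ - π) :=
      Real.sin_nonneg_of_nonneg_of_le_pi (by linarith) (by linarith)
    have h2' : Real.sin ψ = -Real.sin (ψ - π) := by
      have : Real.sin (ψ - π + π) = -Real.sin (ψ - π) := Real.sin_add_pi _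
      simpa using this
    rw [hsin] at h2'
    linarith
  have hψ0 : 0 < ψ := by
    rcases eq_or_lt_of_le h0 with h | h
    · exfalso; rw [← hsin, ← h] at hs; simp at hs
    · exact h
  have hssψ : Real.sin ψ ≤ π - ψ := by
    have := Real.sin_le (show (0:ℝ) ≤ π - ψ by linarith)
    rwa [Real.sin_pi_sub] at this
  have hkey : Real.cos (ψ + δ * Real.sin ψ) < Real.cos ψ := by
    apply Real.cos_lt_cos_of_nonneg_of_le_pi hψ0.le
    · nlinarith [hsin ▸ hs]
    · nlinarith [hsin ▸ hs]
  calc Real.cos (φ + δ * Real.sin φ)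
      = Real.cos (ψ + δ * Real.sin ψ + k * (2 * π)) := by rw [hsin, hφeq]; ring_nf
    _ = Real.cos (ψ + δ * Real.sin ψ) := Real.cos_add_int_mul_two_pi _ _
    _ < Real.cos ψ := hkey
    _ = Real.cos φ := by rw [hφeq, Real.cos_add_int_mul_two_pi]

lemma keyA {δ φ : ℝ} (hδ0 : 0 < δ) (hδ1 : δ ≤ 1) (hs : Real.sin φ ≠ 0) :
    Real.cos (φ + δ * Real.sin φ) < Real.cos φ := by
  rcases lt_or_gt_of_ne hs with h | h
  · have hpos : 0 < Real.sin (-φ) := by rw [Real.sin_neg]; linarith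
    have := keyA_pos hδ0 hδ1 hpos
    rw [Real.sin_neg, Real.cos_neg] at this
    calc Real.cos (φ + δ * Real.sin φ) = Real.cos (-(φ + δ * Real.sin φ)) := (Real.cos_neg _).symm
      _ = Real.cos (-φ + δ * -Real.sin φ) := by ring_nf
      _ < Real.cos φ := this
  · exact keyA_pos hδ0 hδ1 h

lemma exists_angle {a b : ℝ} (h : a ^ 2 + b ^ 2 = 1) :
    ∃ θ : ℝ, Real.cos θ = a ∧ Real.sin θ = b := by
  have hz : (Complex.mk a b) ≠ 0 := by
    intro h0
    rw [Complex.ext_iff] at h0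
    simp only [Complex.zero_re, Complex.zero_im] at h0
    rw [h0.1, h0.2] at h; norm_num at h
  have habs : ‖Complex.mk a b‖ = 1 := by
    rw [Complex.norm_def, Complex.normSq_mk]
    rw [show a * a + b * b = 1 by nlinarith]
    exact Real.sqrt_one
  refine ⟨Complex.arg (Complex.mk a b), ?_, ?_⟩
  · rw [Complex.cos_arg hz, habs]; simp
  · rw [Complex.sin_arg, habs]; simp

set_option maxHeartbeats 4000000 in
theorem stmt9 (ε₁ ε₂ : ℝ) (hε₁ : 0 < ε₁) (hε₁' : ε₁ < 1 / 16)
    (hε₂ : 0 < ε₂) (hε₂' : ε₂ < 1 / 2)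
    (G Ginv : ℝ × ℝ → ℝ × ℝ)
    (hG : ∀ ρ ∈ Icc (1:ℝ) 5, ∀ θ : ℝ,
      G (Φ ρ θ) = Φ (ρ + ε₁ * P ρ) (θ + ε₂ * Real.sin (2 * θ)))
    (hGM : Set.MapsTo G Mset Mset)
    (hGinvM : Set.MapsTo Ginv Mset Mset)
    (hleft : ∀ p ∈ Mset, Ginv (G p) = p)
    (hright : ∀ p ∈ Mset, G (Ginv p) = p) :
    Disjoint ((Rot ∘ G ∘ Rot ∘ Ginv) '' Ell) Ell := by
  rw [Set.disjoint_left]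
  rintro _ ⟨q, hq, rfl⟩ hmem
  simp only [Function.comp_apply] at hmem
  have hq' : q.1 ^ 2 / 16 + q.2 ^ 2 / 4 = 1 := hq
  have hχ3 : χ 3 = 4 := by norm_num [χ]
  have hη3 : η 3 = 2 := by norm_num [η]
  -- find θ with Φ 3 θ = q
  obtain ⟨θ, hθc, hθs⟩ := exists_angle (a := q.1 / 4) (b := q.2 / 2)
    (by rw [div_pow, div_pow]; norm_num; linarith)
  have hqΦ : Φ 3 θ = q := by
    unfold Φ
    rw [hχ3, hη3, hθc, hθs, Prod.ext_iff]
    constructor <;> simp <;> ring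
  -- find θ' with θ' + ε₂ sin 2θ' = θ
  obtain ⟨θ', hθ'mem, hθ'⟩ : ∃ θ' ∈ Icc (θ - 1) (θ + 1),
      θ' + ε₂ * Real.sin (2 * θ') = θ := by
    have hf : Continuous fun t : ℝ => t + ε₂ * Real.sin (2 * t) := by fun_prop
    have hsub := intermediate_value_Icc (by linarith : θ - 1 ≤ θ + 1) hf.continuousOn
    have hmem2 : θ ∈ Icc ((θ - 1) + ε₂ * Real.sin (2 * (θ - 1)))
        ((θ + 1) + ε₂ * Real.sin (2 * (θ + 1))) := by
      constructor
      · nlinarith [Real.sin_le_one (2 * (θ - 1))]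
      · nlinarith [Real.neg_one_le_sin (2 * (θ + 1))]
    obtain ⟨t, ht, hft⟩ := hsub hmem2
    exact ⟨t, ht, hft⟩
  have pyth : Real.sin θ' ^ 2 + Real.cos θ' ^ 2 = 1 := Real.sin_sq_add_cos_sq θ'
  have hΦM : Φ 3 θ' ∈ Mset := by
    constructor <;> simp only [Φ, hχ3, hη3] <;>
      nlinarith [pyth, sq_nonneg (Real.sin θ'), sq_nonneg (Real.cos θ')]
  have hGinvq : Ginv q = Φ 3 θ' := by
    have h1 := hG 3 (by norm_num) θ'
    rw [show (3:ℝ) + ε₁ * P 3 = 3 by norm_num [P], hθ', hqΦ] at h1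
    calc Ginv q = Ginv (G (Φ 3 θ')) := by rw [h1]
      _ = Φ 3 θ' := hleft _ hΦM
  have hRot1 : Rot (Ginv q) = (-2 * Real.sin θ', 4 * Real.cos θ') := by
    rw [hGinvq]
    simp only [Rot, Φ, hχ3, hη3]
    rw [Prod.mk.injEq]
    constructor <;> ring
  -- find ρ via IVT
  have hχpos : ∀ x ∈ Icc (1:ℝ) 5, 0 < χ x := fun x hx =>
    div_pos (by linarith [hx.1]) (by linarith [hx.1])
  have hηpos : ∀ x ∈ Icc (1:ℝ) 5, 0 < η x := fun x hx =>
    div_pos (by linarith [hx.1]) (by linarith [hx.2])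
  have hχcont : ContinuousOn χ (Icc 1 5) := by
    unfold χ
    exact ContinuousOn.div (by fun_prop) (by fun_prop)
      (fun x hx => by have := hx.1; intro h; linarith [show x = -1 by linarith])
  have hηcont : ContinuousOn η (Icc 1 5) := by
    unfold η
    exact ContinuousOn.div (by fun_prop) (by fun_prop)
      (fun x hx => by have := hx.2; intro h; linarith [show x = 7 by linarith])
  obtain ⟨ρ, hρmem, hWρ⟩ : ∃ ρ ∈ Icc (1:ℝ) 5,
      (2 * Real.sin θ') ^ 2 / (χ ρ) ^ 2 + (4 * Real.cos θ') ^ 2 / (η ρ) ^ 2 = 1 := by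
    set W : ℝ → ℝ := fun r =>
      (2 * Real.sin θ') ^ 2 / (χ r) ^ 2 + (4 * Real.cos θ') ^ 2 / (η r) ^ 2 with hW_def
    have hWcont : ContinuousOn W (Icc 1 5) := by
      apply ContinuousOn.add
      · exact ContinuousOn.div continuousOn_const (hχcont.pow 2)
          (fun x hx => pow_ne_zero 2 (hχpos x hx).ne')
      · exact ContinuousOn.div continuousOn_const (hηcont.pow 2)
          (fun x hx => pow_ne_zero 2 (hηpos x hx).ne')
    have hχ1 : χ 1 = 1 := by norm_num [χ]
    have hη1 : η 1 = 1 := by norm_num [η]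
    have hχ5 : χ 5 = 5 := by norm_num [χ]
    have hη5 : η 5 = 5 := by norm_num [η]
    have hW1 : 1 ≤ W 1 := by
      simp only [hW_def, hχ1, hη1]
      nlinarith [pyth, sq_nonneg (Real.sin θ'), sq_nonneg (Real.cos θ')]
    have hW5 : W 5 ≤ 1 := by
      simp only [hW_def, hχ5, hη5]
      nlinarith [pyth, sq_nonneg (Real.sin θ'), sq_nonneg (Real.cos θ')]
    have hsub := intermediate_value_Icc' (by norm_num : (1:ℝ) ≤ 5) hWcont
    obtain ⟨ρ, h1, h2⟩ := hsub ⟨hW5, hW1⟩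
    exact ⟨ρ, h1, h2⟩
  obtain ⟨hρ1, hρ5⟩ := hρmem
  have hχρ : 0 < χ ρ := hχpos ρ ⟨hρ1, hρ5⟩
  have hηρ : 0 < η ρ := hηpos ρ ⟨hρ1, hρ5⟩
  obtain ⟨ψ, hψc, hψs⟩ := exists_angle (a := (-2 * Real.sin θ') / χ ρ)
    (b := (4 * Real.cos θ') / η ρ)
    (by rw [div_pow, div_pow]
        rw [show (-2 * Real.sin θ') ^ 2 = (2 * Real.sin θ') ^ 2 by ring]
        exact hWρ)
  have hx : χ ρ * Real.cos ψ = -2 * Real.sin θ' := by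
    rw [hψc, mul_comm, div_mul_cancel₀ _ hχρ.ne']
  have hy : η ρ * Real.sin ψ = 4 * Real.cos θ' := by
    rw [hψs, mul_comm, div_mul_cancel₀ _ hηρ.ne']
  have hΦρ : Φ ρ ψ = (-2 * Real.sin θ', 4 * Real.cos θ') := by
    unfold Φ; rw [hx, hy]
  have pyth1 : Real.sin ψ ^ 2 = 1 - Real.cos ψ ^ 2 := Real.sin_sq ψ
  have hD : (χ ρ) ^ 2 * Real.cos ψ ^ 2 / 4 + (η ρ) ^ 2 * Real.sin ψ ^ 2 / 16 = 1 := by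
    linear_combination (χ ρ * Real.cos ψ - 2 * Real.sin θ') / 4 * hx +
      (η ρ * Real.sin ψ + 4 * Real.cos θ') / 16 * hy + pyth
  have hηχ : η ρ ≤ χ ρ := eta_le_chi hρ1 hρ5
  have hc1sq : Real.cos ψ ^ 2 ≤ 1 := by nlinarith [sq_nonneg (Real.sin ψ)]
  have hc10 : (0:ℝ) ≤ Real.cos ψ ^ 2 := sq_nonneg _
  have hAB0 : 0 ≤ (χ ρ) ^ 2 / 4 - (η ρ) ^ 2 / 16 := by
    nlinarith [mul_nonneg (sub_nonneg.2 hηχ) (show (0:ℝ) ≤ χ ρ + η ρ by linarith),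
      sq_nonneg (η ρ), hηρ.le]
  have hA4 : 4 ≤ (χ ρ) ^ 2 := by
    nlinarith [mul_nonneg (sq_nonneg (Real.sin ψ)) hAB0, hD, pyth1]
  have hχ2 : 2 ≤ χ ρ := by nlinarith [hA4, hχρ]
  have hB16 : (η ρ) ^ 2 ≤ 16 := by
    nlinarith [mul_nonneg hc10 hAB0, hD, pyth1]
  have hη4 : η ρ ≤ 4 := by nlinarith [hB16, hηρ]
  have hρlow : 7 / 5 ≤ ρ := by
    by_contra h
    push_neg at h
    have := chi_lt (show (-1:ℝ) < ρ by linarith) h (by norm_num)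
    rw [show χ (7/5) = 2 by norm_num [χ]] at this
    linarith
  have hρhigh : ρ ≤ 23 / 5 := by
    by_contra h
    push_neg at h
    have := eta_lt (show (-1:ℝ) < 23/5 by norm_num) h (by linarith)
    rw [show η (23/5) = 4 by norm_num [η]] at this
    linarith
  have hPle : P ρ ≤ 0 := by
    unfold P
    nlinarith [mul_nonneg (mul_nonneg (show (0:ℝ) ≤ ρ - 1 by linarith)
      (sq_nonneg (ρ - 3))) (show (0:ℝ) ≤ 5 - ρ by linarith)]
  have hρ'le : ρ + ε₁ * P ρ ≤ ρ := by
    linarith [mul_nonpos_of_nonneg_of_nonpos hε₁.le hPle]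
  have h16 : (ρ - 3) ^ 2 * (5 - ρ) ≤ 16 := by
    have key : 16 - (ρ - 3) ^ 2 * (5 - ρ) = (ρ - 1) * ((ρ - 5) ^ 2 + 4) := by ring
    linarith [key, mul_nonneg (show (0:ℝ) ≤ ρ - 1 by linarith)
      (show (0:ℝ) ≤ (ρ - 5) ^ 2 + 4 by positivity)]
  have hρ'1 : 1 ≤ ρ + ε₁ * P ρ := by
    have key : ρ + ε₁ * P ρ - 1 = (ρ - 1) * (1 - ε₁ * ((ρ - 3) ^ 2 * (5 - ρ))) := by
      unfold P; ring
    have h2 : ε₁ * ((ρ - 3) ^ 2 * (5 - ρ)) ≤ ε₁ * 16 :=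
      mul_le_mul_of_nonneg_left h16 hε₁.le
    linarith [key, mul_nonneg (show (0:ℝ) ≤ ρ - 1 by linarith)
      (show (0:ℝ) ≤ 1 - ε₁ * ((ρ - 3) ^ 2 * (5 - ρ)) by linarith)]
  have hρ'5 : ρ + ε₁ * P ρ ≤ 5 := le_trans hρ'le hρ5
  have hχρ' : 0 < χ (ρ + ε₁ * P ρ) := hχpos _ ⟨hρ'1, hρ'5⟩
  have hηρ' : 0 < η (ρ + ε₁ * P ρ) := hηpos _ ⟨hρ'1, hρ'5⟩
  have hχρ'le : χ (ρ + ε₁ * P ρ) ≤ χ ρ := chi_le (by linarith) hρ'le (by linarith)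
  have hηρ'le : η (ρ + ε₁ * P ρ) ≤ η ρ := eta_le (by linarith) hρ'le (by linarith)
  have hηχ' : η (ρ + ε₁ * P ρ) ≤ χ (ρ + ε₁ * P ρ) := eta_le_chi hρ'1 hρ'5
  have pyth2 : Real.sin (ψ + ε₂ * Real.sin (2 * ψ)) ^ 2 =
      1 - Real.cos (ψ + ε₂ * Real.sin (2 * ψ)) ^ 2 := Real.sin_sq _
  have hcosstrict : Real.sin (2 * ψ) ≠ 0 →
      Real.cos (ψ + ε₂ * Real.sin (2 * ψ)) ^ 2 < Real.cos ψ ^ 2 := by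
    intro h0
    have hk := keyA (δ := 2 * ε₂) (φ := 2 * ψ) (by linarith) (by linarith) h0
    have harg : 2 * ψ + 2 * ε₂ * Real.sin (2 * ψ) =
        2 * (ψ + ε₂ * Real.sin (2 * ψ)) := by ring
    rw [harg] at hk
    have e1 := Real.cos_sq (ψ + ε₂ * Real.sin (2 * ψ))
    have e2 := Real.cos_sq ψ
    linarith
  have hcos2le : Real.cos (ψ + ε₂ * Real.sin (2 * ψ)) ^ 2 ≤ Real.cos ψ ^ 2 := by
    rcases eq_or_ne (Real.sin (2 * ψ)) 0 with h0 | h0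
    · rw [h0]; simp
    · exact (hcosstrict h0).le
  -- evaluate the composition
  have hGp : G (Φ ρ ψ) = Φ (ρ + ε₁ * P ρ) (ψ + ε₂ * Real.sin (2 * ψ)) :=
    hG ρ ⟨hρ1, hρ5⟩ ψ
  have hfinal : Rot (G (Rot (Ginv q))) =
      (-(η (ρ + ε₁ * P ρ) * Real.sin (ψ + ε₂ * Real.sin (2 * ψ))),
        χ (ρ + ε₁ * P ρ) * Real.cos (ψ + ε₂ * Real.sin (2 * ψ))) := by
    rw [hRot1, ← hΦρ, hGp]
    simp [Rot, Φ]
  rw [hfinal] at hmem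
  have hmem' : (η (ρ + ε₁ * P ρ) * Real.sin (ψ + ε₂ * Real.sin (2 * ψ))) ^ 2 / 16 +
      (χ (ρ + ε₁ * P ρ) * Real.cos (ψ + ε₂ * Real.sin (2 * ψ))) ^ 2 / 4 = 1 := by
    simp only [Ell, Set.mem_setOf_eq] at hmem
    linear_combination hmem
  rcases eq_or_ne ρ 3 with h3 | h3
  · -- ρ = 3
    have hρ'eq : ρ + ε₁ * P ρ = 3 := by rw [h3]; norm_num [P]
    have hχρ4 : χ ρ = 4 := by rw [h3]; exact hχ3
    have hηρ2 : η ρ = 2 := by rw [h3]; exact hη3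
    have hc15 : Real.cos ψ ^ 2 = 1 / 5 := by
      rw [hχρ4, hηρ2] at hD
      linarith only [pyth1, hD]
    have hs2ψ : Real.sin (2 * ψ) ≠ 0 := by
      rw [Real.sin_two_mul]
      intro h0
      rcases mul_eq_zero.1 h0 with h | h
      · rcases mul_eq_zero.1 h with h' | h'
        · norm_num at h'
        · rw [h'] at pyth1
          norm_num at pyth1
          linarith only [pyth1, hc15]
      · rw [h] at hc15
        norm_num at hc15
    have hstrict := hcosstrict hs2ψ
    rw [hρ'eq, hχ3, hη3] at hmem'
    have e1 : (2 * Real.sin (ψ + ε₂ * Real.sin (2 * ψ))) ^ 2 =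
        4 * (1 - Real.cos (ψ + ε₂ * Real.sin (2 * ψ)) ^ 2) := by
      rw [mul_pow, pyth2]; ring
    linarith only [hmem', e1, hstrict, hc15]
  · -- ρ ≠ 3
    have hPneg : P ρ < 0 := by
      have h3' : (0:ℝ) < (ρ - 3) ^ 2 := by
        have h4 : ρ - 3 ≠ 0 := sub_ne_zero.2 h3
        positivity
      have hprod : 0 < (ρ - 1) * (ρ - 3) ^ 2 * (5 - ρ) :=
        mul_pos (mul_pos (by linarith) h3') (by linarith)
      unfold P
      nlinarith only [hprod]
    have hρ'lt : ρ + ε₁ * P ρ < ρ := by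
      have h4 := mul_pos hε₁ (neg_pos.2 hPneg)
      nlinarith only [h4]
    have hχlt : χ (ρ + ε₁ * P ρ) < χ ρ :=
      chi_lt (by linarith only [hρ'1]) hρ'lt (by linarith only [hρ5])
    have hηlt : η (ρ + ε₁ * P ρ) < η ρ :=
      eta_lt (by linarith only [hρ'1]) hρ'lt (by linarith only [hρ5])
    have hsq1 : (χ (ρ + ε₁ * P ρ)) ^ 2 < (χ ρ) ^ 2 := by
      have h4 : 0 < (χ ρ - χ (ρ + ε₁ * P ρ)) * (χ ρ + χ (ρ + ε₁ * P ρ)) :=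
        mul_pos (by linarith only [hχlt]) (by linarith only [hχρ, hχρ'])
      nlinarith only [h4]
    have hsq2 : (η (ρ + ε₁ * P ρ)) ^ 2 < (η ρ) ^ 2 := by
      have h4 : 0 < (η ρ - η (ρ + ε₁ * P ρ)) * (η ρ + η (ρ + ε₁ * P ρ)) :=
        mul_pos (by linarith only [hηlt]) (by linarith only [hηρ, hηρ'])
      nlinarith only [h4]
    have hsq3 : (η (ρ + ε₁ * P ρ)) ^ 2 ≤ (χ (ρ + ε₁ * P ρ)) ^ 2 := by
      have h4 : 0 ≤ (χ (ρ + ε₁ * P ρ) - η (ρ + ε₁ * P ρ)) * (χ (ρ + ε₁ * P ρ) + η (ρ + ε₁ * P ρ)) :=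
        mul_nonneg (by linarith only [hηχ']) (by linarith only [hχρ', hηρ'])
      nlinarith only [h4]
    have e1 : (η (ρ + ε₁ * P ρ) * Real.sin (ψ + ε₂ * Real.sin (2 * ψ))) ^ 2 =
        (η (ρ + ε₁ * P ρ)) ^ 2 - (η (ρ + ε₁ * P ρ)) ^ 2 *
          Real.cos (ψ + ε₂ * Real.sin (2 * ψ)) ^ 2 := by
      rw [mul_pow, pyth2]; ring
    have e2 : (χ (ρ + ε₁ * P ρ) * Real.cos (ψ + ε₂ * Real.sin (2 * ψ))) ^ 2 =
        (χ (ρ + ε₁ * P ρ)) ^ 2 * Real.cos (ψ + ε₂ * Real.sin (2 * ψ)) ^ 2 := by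
      rw [mul_pow]
    have step1 : (η (ρ + ε₁ * P ρ) * Real.sin (ψ + ε₂ * Real.sin (2 * ψ))) ^ 2 / 16 +
        (χ (ρ + ε₁ * P ρ) * Real.cos (ψ + ε₂ * Real.sin (2 * ψ))) ^ 2 / 4 ≤
        (η (ρ + ε₁ * P ρ)) ^ 2 * (1 - Real.cos ψ ^ 2) / 16 +
        (χ (ρ + ε₁ * P ρ)) ^ 2 * Real.cos ψ ^ 2 / 4 := by
      have hmul := mul_le_mul_of_nonneg_right hcos2le
        (show (0:ℝ) ≤ (χ (ρ + ε₁ * P ρ)) ^ 2 / 4 - (η (ρ + ε₁ * P ρ)) ^ 2 / 16 by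
          linarith only [hsq3, sq_nonneg (χ (ρ + ε₁ * P ρ))])
      linarith only [e1, e2, hmul]
    have e3 : (η ρ) ^ 2 * Real.sin ψ ^ 2 =
        (η ρ) ^ 2 - (η ρ) ^ 2 * Real.cos ψ ^ 2 := by
      rw [pyth1]; ring
    have step2 : (η (ρ + ε₁ * P ρ)) ^ 2 * (1 - Real.cos ψ ^ 2) / 16 +
        (χ (ρ + ε₁ * P ρ)) ^ 2 * Real.cos ψ ^ 2 / 4 < 1 := by
      rcases eq_or_lt_of_le hc10 with h0 | h0
      · have hc0 : Real.cos ψ ^ 2 = 0 := h0.symm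
        have hz1 : (χ ρ) ^ 2 * Real.cos ψ ^ 2 = 0 := by rw [hc0, mul_zero]
        have hz2 : (χ (ρ + ε₁ * P ρ)) ^ 2 * Real.cos ψ ^ 2 = 0 := by rw [hc0, mul_zero]
        have hz3 : (η (ρ + ε₁ * P ρ)) ^ 2 * Real.cos ψ ^ 2 = 0 := by rw [hc0, mul_zero]
        have hz4 : (η ρ) ^ 2 * Real.cos ψ ^ 2 = 0 := by rw [hc0, mul_zero]
        linarith only [hD, e3, hsq2, hc0, hz1, hz2, hz3, hz4]
      · have hmul2 := mul_lt_mul_of_pos_right hsq1 h0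
        have hmul3 := mul_le_mul_of_nonneg_right hsq2.le
          (show (0:ℝ) ≤ 1 - Real.cos ψ ^ 2 by linarith only [hc1sq])
        linarith only [hD, e3, hmul2, hmul3]
    linarith only [hmem', step1, step2]
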